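/- Let p ≥ 1, let k_j > 0 be a real number, let Γ be a symmetric positive definite real p×p matrix, and let B be a symmetric real p×p matrix. Define Y* := k_j · Γ^{1/2} (I − Γ^{−1/2} B Γ^{−1/2})₊ Γ^{1/2}. Then Y* ⪰ O, −k_j·B ≺ Y*, and for every symmetric Y with Y ⪰ O and −k_j·B ≺ Y one has −trace(Y Γ^{−1}) + k_j·log det(B + Y/k_j) ≤ −trace(Y* Γ^{−1}) + k_j·log det(B + Y*/k_j). -/

import Mathlib

set_option linter.unusedSectionVars false
set_option linter.unusedVariables false
set_option maxHeartbeats 1000000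

/-- The positive part `X₊` of a symmetric (Hermitian) real matrix `X`: with spectral
decomposition `X = U diag(λ₁,…,λ_p) Uᵀ`, it is `U diag(max(λ₁,0),…,max(λ_p,0)) Uᵀ`
(junk value `0` if `X` is not Hermitian). -/
noncomputable def matPosPart {p : ℕ} (X : Matrix (Fin p) (Fin p) ℝ) :
    Matrix (Fin p) (Fin p) ℝ :=
  if hX : X.IsHermitian then
    (hX.eigenvectorUnitary : Matrix (Fin p) (Fin p) ℝ) *
      Matrix.diagonal (fun i => max (hX.eigenvalues i) 0) *
      (star hX.eigenvectorUnitary : Matrix (Fin p) (Fin p) ℝ)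
  else 0

/-- The square root of a positive semidefinite matrix, as `Matrix.PosSemidef.sqrt` was defined
in the older Mathlib (removed since). -/
noncomputable def Matrix.PosSemidef.sqrt {n : Type*} [Fintype n] [DecidableEq n]
    {A : Matrix n n ℝ} (hA : A.PosSemidef) : Matrix n n ℝ :=
  (hA.1.eigenvectorUnitary : Matrix n n ℝ) *
    Matrix.diagonal ((↑) ∘ (Real.sqrt ·) ∘ hA.1.eigenvalues) *
    (star hA.1.eigenvectorUnitary : Matrix n n ℝ)

theorem Matrix.PosSemidef.posSemidef_sqrt {n : Type*} [Fintype n] [DecidableEq n]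
    {A : Matrix n n ℝ} (hA : A.PosSemidef) : hA.sqrt.PosSemidef := by
  unfold Matrix.PosSemidef.sqrt
  have h := (Matrix.PosSemidef.diagonal
    (d := ((↑) ∘ (Real.sqrt ·) ∘ hA.1.eigenvalues : n → ℝ))
    (by intro i; simp [Real.sqrt_nonneg])).mul_mul_conjTranspose_same
    (hA.1.eigenvectorUnitary : Matrix n n ℝ)
  rwa [Matrix.star_eq_conjTranspose]

theorem Matrix.PosSemidef.sqrt_mul_self {n : Type*} [Fintype n] [DecidableEq n]
    {A : Matrix n n ℝ} (hA : A.PosSemidef) : hA.sqrt * hA.sqrt = A := by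
  have hu : (star hA.1.eigenvectorUnitary : Matrix n n ℝ) * hA.1.eigenvectorUnitary = 1 :=
    Unitary.coe_star_mul_self _
  conv_rhs => rw [hA.1.spectral_theorem, Unitary.conjStarAlgAut_apply]
  unfold Matrix.PosSemidef.sqrt
  have e : ∀ (U V D E : Matrix n n ℝ), U * D * V * (U * E * V) = U * (D * (V * U) * E) * V := by
    intros; simp only [Matrix.mul_assoc]
  rw [e, hu, Matrix.mul_one, Matrix.diagonal_mul_diagonal]
  congr 2
  congr 1
  funext i
  simp [RCLike.ofReal_real_eq_id, Real.mul_self_sqrt (hA.eigenvalues_nonneg i)]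

open Matrix
namespace Stmt1Aux
variable {p : ℕ}

lemma trace_nonneg {A : Matrix (Fin p) (Fin p) ℝ} (hA : A.PosSemidef) : 0 ≤ A.trace :=
  Finset.sum_nonneg fun i _ => by simpa using hA.dotProduct_mulVec_nonneg (Pi.single i 1)

lemma trace_mul_nonneg {A B : Matrix (Fin p) (Fin p) ℝ} (hA : A.PosSemidef)
    (hB : B.PosSemidef) : 0 ≤ (A * B).trace := by
  have h1 : A * B = hA.sqrt * (hA.sqrt * B) := by rw [← mul_assoc, hA.sqrt_mul_self]
  rw [h1, trace_mul_comm]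
  have h2 : (hA.sqrt * B * hA.sqrt).PosSemidef := by
    have := hB.mul_mul_conjTranspose_same hA.sqrt
    rwa [hA.posSemidef_sqrt.1.eq] at this
  simpa [mul_assoc] using trace_nonneg h2

lemma posDef_of_det_ne_zero {A : Matrix (Fin p) (Fin p) ℝ} (hA : A.PosSemidef)
    (h : A.det ≠ 0) : A.PosDef := by
  refine PosDef.of_dotProduct_mulVec_pos hA.1 fun x hx => ?_
  rcases lt_or_eq_of_le (hA.dotProduct_mulVec_nonneg x) with h1 | h1
  · exact h1
  · exfalso
    have h2 : A *ᵥ x = 0 := (hA.dotProduct_mulVec_zero_iff x).mp h1.symm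
    have hinj : Function.Injective A.mulVec :=
      mulVec_injective_iff_isUnit.mpr (isUnit_iff_isUnit_det A |>.mpr h.isUnit)
    exact hx (hinj (by simpa using h2))

lemma posDef_conj {A C : Matrix (Fin p) (Fin p) ℝ} (hA : A.PosDef) (hC : IsUnit C.det) :
    (Cᴴ * A * C).PosDef := by
  refine PosDef.of_dotProduct_mulVec_pos (isHermitian_conjTranspose_mul_mul C hA.1) fun x hx => ?_
  have hCx : C *ᵥ x ≠ 0 := by
    intro h
    have hinj : Function.Injective C.mulVec :=
      mulVec_injective_iff_isUnit.mpr (isUnit_iff_isUnit_det C |>.mpr hC)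
    exact hx (hinj (by simpa using h))
  simpa only [star_mulVec, dotProduct_mulVec, vecMul_vecMul] using hA.dotProduct_mulVec_pos hCx

lemma posSemidef_smul {A : Matrix (Fin p) (Fin p) ℝ} (hA : A.PosSemidef) {c : ℝ}
    (hc : 0 ≤ c) : (c • A).PosSemidef := by
  refine PosSemidef.of_dotProduct_mulVec_nonneg
    (by simpa [Matrix.IsHermitian, conjTranspose_smul] using congrArg (c • ·) hA.1.eq) fun x => ?_
  rw [smul_mulVec, dotProduct_smul]
  exact mul_nonneg hc (hA.dotProduct_mulVec_nonneg x)

lemma posDef_smul {A : Matrix (Fin p) (Fin p) ℝ} (hA : A.PosDef) {c : ℝ}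
    (hc : 0 < c) : (c • A).PosDef := by
  refine PosDef.of_dotProduct_mulVec_pos
    (by simpa [Matrix.IsHermitian, conjTranspose_smul] using congrArg (c • ·) hA.1.eq) fun x hx => ?_
  rw [smul_mulVec, dotProduct_smul]
  exact mul_pos hc (hA.dotProduct_mulVec_pos hx)

lemma trace_spec {A : Matrix (Fin p) (Fin p) ℝ} (hA : A.IsHermitian) :
    A.trace = ∑ i, hA.eigenvalues i := by
  conv_lhs => rw [hA.spectral_theorem]
  rw [Unitary.conjStarAlgAut_apply, trace_mul_cycle, Unitary.coe_star_mul_self hA.eigenvectorUnitary, one_mul]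
  simp [trace_diagonal]

lemma det_spec {A : Matrix (Fin p) (Fin p) ℝ} (hA : A.IsHermitian) :
    A.det = ∏ i, hA.eigenvalues i := by
  simpa [RCLike.ofReal_real_eq_id] using hA.det_eq_prod_eigenvalues

lemma logdet_le {W W0 : Matrix (Fin p) (Fin p) ℝ} (hW : W.PosDef) (hW0 : W0.PosDef) :
    Real.log W.det ≤ Real.log W0.det + (W0⁻¹ * W).trace - p := by
  set T := hW0.posSemidef.sqrt with hTdef
  have hT : T.PosSemidef := hW0.posSemidef.posSemidef_sqrt
  have hTT : T * T = W0 := hW0.posSemidef.sqrt_mul_self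
  have hdetT : T.det ≠ 0 := by
    intro h
    have := hW0.det_pos
    rw [← hTT, det_mul, h, zero_mul] at this
    exact lt_irrefl _ this
  have hTih : T⁻¹.IsHermitian := hT.1.inv
  have hdetTi : IsUnit T⁻¹.det := by
    simp only [det_nonsing_inv, Ring.inverse_eq_inv']
    exact (isUnit_iff_ne_zero).mpr (inv_ne_zero hdetT)
  set C := T⁻¹ * W * T⁻¹ with hCdef
  have hCpd : C.PosDef := by
    have := posDef_conj hW hdetTi
    rwa [hTih.eq] at this
  set μ := hCpd.1.eigenvalues with hμdef
  have hμ : ∀ i, 0 < μ i := hCpd.eigenvalues_pos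
  have key : Real.log C.det ≤ C.trace - p := by
    rw [det_spec hCpd.1, trace_spec hCpd.1,
      Real.log_prod (fun i _ => (hμ i).ne')]
    have h1 : ∀ i ∈ Finset.univ, Real.log (μ i) ≤ μ i - 1 :=
      fun i _ => Real.log_le_sub_one_of_pos (hμ i)
    calc ∑ i, Real.log (μ i) ≤ ∑ i : Fin p, (μ i - 1) := Finset.sum_le_sum h1
      _ = (∑ i, μ i) - p := by
          rw [Finset.sum_sub_distrib]
          simp [Finset.card_univ]
  have hdetC : C.det = W.det / W0.det := by
    have h2 : T.det * T.det = W0.det := by rw [← det_mul, hTT]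
    rw [hCdef, det_mul, det_mul, det_nonsing_inv, Ring.inverse_eq_inv']
    rw [← h2]
    field_simp
  have htrC : C.trace = (W0⁻¹ * W).trace := by
    rw [hCdef, trace_mul_cycle, ← Matrix.mul_inv_rev, hTT]
  rw [hdetC, Real.log_div hW.det_pos.ne' hW0.det_pos.ne'] at key
  rw [htrC] at key
  linarith

section Conj
variable {u : Matrix (Fin p) (Fin p) ℝ} (hu : star u * u = 1) (hu' : u * star u = 1)
local notation "conj" d => u * Matrix.diagonal d * star u

include hu in
lemma conj_mul (d e : Fin p → ℝ) :
    (conj d) * (conj e) = conj (d * e) := by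
  have : (u * diagonal d * star u) * (u * diagonal e * star u)
      = u * (diagonal d * (star u * u) * diagonal e) * star u := by
    simp only [mul_assoc]
  rw [this, hu, mul_one, diagonal_mul_diagonal]
  rfl

lemma conj_add (d e : Fin p → ℝ) : (conj d) + (conj e) = conj (d + e) := by
  rw [show Matrix.diagonal (d + e) = diagonal d + diagonal e by rw [diagonal_add]; rfl,
    Matrix.mul_add, Matrix.add_mul]

lemma conj_sub (d e : Fin p → ℝ) : (conj d) - (conj e) = conj (d - e) := by
  have h : diagonal (d - e) = diagonal d - diagonal e := by
    ext i j; by_cases h : i = j <;> simp [diagonal, h]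
  rw [h, Matrix.mul_sub, Matrix.sub_mul]

include hu' in
lemma conj_one : (conj (1 : Fin p → ℝ)) = 1 := by
  have : diagonal (1 : Fin p → ℝ) = (1 : Matrix (Fin p) (Fin p) ℝ) := by
    simp [Pi.one_def]
  rw [this, mul_one, hu']

include hu hu' in
lemma conj_inv (d : Fin p → ℝ) (hd : ∀ i, d i ≠ 0) :
    (conj d)⁻¹ = conj (fun i => (d i)⁻¹) := by
  refine Matrix.inv_eq_right_inv ?_
  rw [conj_mul hu]
  have : (d * fun i => (d i)⁻¹) = 1 := funext fun i => mul_inv_cancel₀ (hd i)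
  rw [this, conj_one hu']

lemma conj_posSemidef (d : Fin p → ℝ) (hd : ∀ i, 0 ≤ d i) :
    (conj d).PosSemidef := by
  have h := (posSemidef_diagonal_iff.mpr hd).mul_mul_conjTranspose_same u
  rwa [← star_eq_conjTranspose] at h

include hu in
lemma conj_posDef (d : Fin p → ℝ) (hd : ∀ i, 0 < d i) :
    (conj d).PosDef := by
  have hdet : IsUnit (star u).det := by
    refine IsUnit.of_mul_eq_one u.det ?_
    rw [← det_mul, hu]
    simp
  have h := posDef_conj (A := diagonal d) (C := star u) (Matrix.PosDef.diagonal hd) hdet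
  rwa [← star_eq_conjTranspose, star_star] at h

include hu in
lemma conj_trace (d : Fin p → ℝ) : (conj d).trace = ∑ i, d i := by
  rw [trace_mul_cycle, hu, one_mul, trace_diagonal]

end Conj
end Stmt1Aux

open Matrix Stmt1Aux

/-- `Y* := kⱼ Γ^{1/2} (I − Γ^{−1/2} B Γ^{−1/2})₊ Γ^{1/2}` satisfies
`Y* ⪰ O`, `−kⱼB ≺ Y*`, and maximizes `−trace(Y Γ⁻¹) + kⱼ log det(B + Y/kⱼ)` over all
symmetric `Y` with `Y ⪰ O` and `−kⱼB ≺ Y`. -/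
theorem stmt1 {p : ℕ} (hp : 1 ≤ p) (kj : ℝ) (hkj : 0 < kj)
    (Γ B : Matrix (Fin p) (Fin p) ℝ) (hΓs : Γ.IsSymm) (hΓ : Γ.PosDef) (hBs : B.IsSymm)
    (sqrtΓ : Matrix (Fin p) (Fin p) ℝ) (hsqrtΓ : sqrtΓ = hΓ.posSemidef.sqrt)
    (Ystar : Matrix (Fin p) (Fin p) ℝ)
    (hYstar : Ystar = kj • (sqrtΓ * matPosPart (1 - sqrtΓ⁻¹ * B * sqrtΓ⁻¹) * sqrtΓ)) :
    Ystar.PosSemidef ∧ (Ystar + kj • B).PosDef ∧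
    ∀ Y : Matrix (Fin p) (Fin p) ℝ, Y.IsSymm → Y.PosSemidef → (Y + kj • B).PosDef →
      -(Y * Γ⁻¹).trace + kj * Real.log (B + kj⁻¹ • Y).det ≤
        -(Ystar * Γ⁻¹).trace + kj * Real.log (B + kj⁻¹ • Ystar).det := by
  set S := sqrtΓ with hSdef
  have hSps : S.PosSemidef := hsqrtΓ ▸ hΓ.posSemidef.posSemidef_sqrt
  have hSS : S * S = Γ := by rw [hsqrtΓ]; exact hΓ.posSemidef.sqrt_mul_self
  have hdetS : S.det ≠ 0 := by
    intro h
    have h2 := hΓ.det_pos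
    rw [← hSS, det_mul, h, zero_mul] at h2
    exact lt_irrefl _ h2
  have hSpd : S.PosDef := posDef_of_det_ne_zero hSps hdetS
  have hSh : S.IsHermitian := hSps.1
  have hSih : S⁻¹.IsHermitian := hSh.inv
  have hUnit : IsUnit S.det := hdetS.isUnit
  have hSSi : S * S⁻¹ = 1 := mul_nonsing_inv _ hUnit
  have hSiS : S⁻¹ * S = 1 := nonsing_inv_mul _ hUnit
  have hdetSi : IsUnit S⁻¹.det := by
    simp only [det_nonsing_inv, Ring.inverse_eq_inv']
    exact (isUnit_iff_ne_zero).mpr (inv_ne_zero hdetS)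
  have hΓinv : Γ⁻¹ = S⁻¹ * S⁻¹ := by rw [← hSS, Matrix.mul_inv_rev]
  set A := (1 : Matrix (Fin p) (Fin p) ℝ) - S⁻¹ * B * S⁻¹ with hAdef
  have hBh : B.IsHermitian := by
    rwa [Matrix.IsHermitian, conjTranspose_eq_transpose_of_trivial]
  have hAh : A.IsHermitian := by
    apply IsHermitian.sub isHermitian_one
    have := isHermitian_conjTranspose_mul_mul S⁻¹ hBh
    rwa [hSih.eq] at this
  set u := (hAh.eigenvectorUnitary : Matrix (Fin p) (Fin p) ℝ) with hudef
  have hu : star u * u = 1 := Unitary.coe_star_mul_self hAh.eigenvectorUnitary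
  have hu' : u * star u = 1 := mem_unitaryGroup_iff.mp hAh.eigenvectorUnitary.2
  set lam := hAh.eigenvalues with hlamdef
  have hAspec : A = u * diagonal lam * star u := by
    simpa [RCLike.ofReal_real_eq_id, Function.id_comp, Unitary.conjStarAlgAut_apply] using hAh.spectral_theorem
  set lamp : Fin p → ℝ := fun i => max (lam i) 0 with hlampdef
  have hP : matPosPart A = u * diagonal lamp * star u := by
    rw [matPosPart, dif_pos hAh]
  have hM : S⁻¹ * B * S⁻¹ = 1 - A := by rw [hAdef, sub_sub_cancel]
  have hMconj : (1 : Matrix (Fin p) (Fin p) ℝ) - A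
      = u * diagonal ((1 : Fin p → ℝ) - lam) * star u := by
    conv_lhs => rw [← conj_one hu', hAspec]
    rw [conj_sub]
  set w : Fin p → ℝ := ((1 : Fin p → ℝ) - lam) + lamp with hwdef
  have hW0conj : ((1 : Matrix (Fin p) (Fin p) ℝ) - A) + matPosPart A
      = u * diagonal w * star u := by
    rw [hMconj, hP, conj_add]
  have hwge1 : ∀ i, 1 ≤ w i := by
    intro i
    have h1 := le_max_left (lam i) 0
    simp only [hwdef, Pi.add_apply, Pi.sub_apply, Pi.one_apply, hlampdef]
    linarith
  have hwpos : ∀ i, 0 < w i := fun i => lt_of_lt_of_le one_pos (hwge1 i)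
  set W0 := ((1 : Matrix (Fin p) (Fin p) ℝ) - A) + matPosPart A with hW0def
  have hW0pd : W0.PosDef := hW0conj ▸ conj_posDef hu w hwpos
  have hW0inv : W0⁻¹ = u * diagonal (fun i => (w i)⁻¹) * star u := by
    rw [hW0conj, conj_inv hu hu' w (fun i => (hwpos i).ne')]
  have hNpsd : ((1 : Matrix (Fin p) (Fin p) ℝ) - W0⁻¹).PosSemidef := by
    rw [hW0inv, ← conj_one hu', conj_sub]
    refine conj_posSemidef _ fun i => ?_
    simp only [Pi.sub_apply, Pi.one_apply]
    have h1 : (w i)⁻¹ ≤ 1 := by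
      rw [inv_le_one_iff₀]
      right; exact hwge1 i
    linarith
  have hW0iP : W0⁻¹ * matPosPart A = matPosPart A := by
    rw [hW0inv, hP, conj_mul hu]
    have hfun : ((fun i => (w i)⁻¹) * lamp) = lamp := by
      funext i
      simp only [Pi.mul_apply, hlampdef]
      rcases le_total (lam i) 0 with h | h
      · rw [max_eq_right h, mul_zero]
      · have hw1 : w i = 1 := by
          simp only [hwdef, Pi.add_apply, Pi.sub_apply, Pi.one_apply, hlampdef]
          rw [max_eq_left h]
          ring
        rw [hw1, inv_one, one_mul]
    rw [hfun]
  -- Part 1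
  have hPpsd : (matPosPart A).PosSemidef :=
    hP ▸ conj_posSemidef lamp (fun i => le_max_right _ _)
  have hYstarPsd : Ystar.PosSemidef := by
    rw [hYstar]
    refine posSemidef_smul ?_ hkj.le
    have := hPpsd.conjTranspose_mul_mul_same S
    rwa [hSh.eq] at this
  -- Part 2
  have hSMS : S * ((1 : Matrix (Fin p) (Fin p) ℝ) - A) * S = B := by
    rw [← hM, show S * (S⁻¹ * B * S⁻¹) * S = (S * S⁻¹) * B * (S⁻¹ * S) by
      simp only [Matrix.mul_assoc], hSSi, hSiS, one_mul, mul_one]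
  have hYstarB : Ystar + kj • B = kj • (S * W0 * S) := by
    rw [hYstar, ← smul_add]
    congr 1
    have h1 : S * W0 * S = B + S * matPosPart A * S := by
      rw [hW0def, Matrix.mul_add, Matrix.add_mul, hSMS]
    rw [h1, add_comm]
  have hYstarBpd : (Ystar + kj • B).PosDef := by
    rw [hYstarB]
    refine posDef_smul ?_ hkj
    have := posDef_conj hW0pd hUnit (C := S)
    rwa [hSh.eq] at this
  refine ⟨hYstarPsd, hYstarBpd, ?_⟩
  -- Part 3
  have obj : ∀ Y : Matrix (Fin p) (Fin p) ℝ, Y.PosSemidef → (Y + kj • B).PosDef →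
      (kj⁻¹ • (S⁻¹ * Y * S⁻¹)).PosSemidef ∧
      (((1 : Matrix (Fin p) (Fin p) ℝ) - A) + kj⁻¹ • (S⁻¹ * Y * S⁻¹)).PosDef ∧
      -(Y * Γ⁻¹).trace + kj * Real.log (B + kj⁻¹ • Y).det
        = kj * (-(kj⁻¹ • (S⁻¹ * Y * S⁻¹)).trace
            + Real.log (((1 : Matrix (Fin p) (Fin p) ℝ) - A) + kj⁻¹ • (S⁻¹ * Y * S⁻¹)).det)
          + kj * Real.log Γ.det := by
    intro Y hY hYB
    set Z := kj⁻¹ • (S⁻¹ * Y * S⁻¹) with hZdef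
    have hZpsd : Z.PosSemidef := by
      refine posSemidef_smul ?_ (inv_pos.mpr hkj).le
      have := hY.conjTranspose_mul_mul_same S⁻¹
      rwa [hSih.eq] at this
    have e1 : S⁻¹ * (Y + kj • B) * S⁻¹ = S⁻¹ * Y * S⁻¹ + kj • (S⁻¹ * B * S⁻¹) := by
      rw [Matrix.mul_add, Matrix.add_mul]
      congr 1
      rw [Matrix.mul_smul, Matrix.smul_mul]
    have e2 : (1 : Matrix (Fin p) (Fin p) ℝ) - A + Z
        = kj⁻¹ • (S⁻¹ * (Y + kj • B) * S⁻¹) := by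
      rw [e1, smul_add, smul_smul, inv_mul_cancel₀ hkj.ne', one_smul, hM, add_comm]
    have hWpd : ((1 : Matrix (Fin p) (Fin p) ℝ) - A + Z).PosDef := by
      rw [e2]
      refine posDef_smul ?_ (inv_pos.mpr hkj)
      have := posDef_conj hYB hdetSi
      rwa [hSih.eq] at this
    refine ⟨hZpsd, hWpd, ?_⟩
    have htr : (Y * Γ⁻¹).trace = kj * Z.trace := by
      rw [hZdef, trace_smul, smul_eq_mul, ← mul_assoc, mul_inv_cancel₀ hkj.ne', one_mul,
        hΓinv, ← Matrix.mul_assoc, trace_mul_cycle]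
    have hBY : B + kj⁻¹ • Y = S * ((1 : Matrix (Fin p) (Fin p) ℝ) - A + Z) * S := by
      rw [Matrix.mul_add, Matrix.add_mul, hSMS]
      congr 1
      rw [hZdef, Matrix.mul_smul, Matrix.smul_mul]
      congr 1
      rw [show S * (S⁻¹ * Y * S⁻¹) * S = (S * S⁻¹) * Y * (S⁻¹ * S) by
        simp only [Matrix.mul_assoc], hSSi, hSiS, one_mul, mul_one]
    have hdet : (B + kj⁻¹ • Y).det = Γ.det * ((1 : Matrix (Fin p) (Fin p) ℝ) - A + Z).det := by
      rw [hBY, det_mul, det_mul,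
        show S.det * ((1 : Matrix (Fin p) (Fin p) ℝ) - A + Z).det * S.det
          = (S.det * S.det) * ((1 : Matrix (Fin p) (Fin p) ℝ) - A + Z).det by ring,
        ← det_mul, hSS]
    rw [htr, hdet, Real.log_mul hΓ.det_pos.ne' hWpd.det_pos.ne']
    ring
  obtain ⟨hZsPsd, hWspd, eqs⟩ := obj Ystar hYstarPsd hYstarBpd
  have hZstar : kj⁻¹ • (S⁻¹ * Ystar * S⁻¹) = matPosPart A := by
    rw [hYstar, Matrix.mul_smul, Matrix.smul_mul, smul_smul, inv_mul_cancel₀ hkj.ne', one_smul,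
      show S⁻¹ * (S * matPosPart A * S) * S⁻¹ = (S⁻¹ * S) * matPosPart A * (S * S⁻¹) by
        simp only [Matrix.mul_assoc], hSiS, hSSi, one_mul, mul_one]
  rw [hZstar] at eqs hWspd
  intro Y hYs hYpsd hYBpd
  obtain ⟨hZpsd, hWpd, eq1⟩ := obj Y hYpsd hYBpd
  rw [eq1, eqs]
  set Z := kj⁻¹ • (S⁻¹ * Y * S⁻¹) with hZdef
  set W := (1 : Matrix (Fin p) (Fin p) ℝ) - A + Z with hWdef
  have hW0' : (1 : Matrix (Fin p) (Fin p) ℝ) - A + matPosPart A = W0 := rfl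
  rw [hW0'] at eqs hWspd ⊢
  -- core inequality
  have hld := logdet_le hWpd hWspd
  have hW0unit : IsUnit W0.det := (isUnit_iff_ne_zero).mpr hW0pd.det_pos.ne'
  have hw0w0 : W0⁻¹ * W0 = 1 := nonsing_inv_mul _ hW0unit
  have hWsplit : W = W0 + (Z - matPosPart A) := by
    rw [hWdef, hW0def]; abel
  have htrW : (W0⁻¹ * W).trace = p + ((W0⁻¹ * Z).trace - (matPosPart A).trace) := by
    rw [hWsplit, Matrix.mul_add, Matrix.mul_sub, hw0w0, trace_add, trace_sub, trace_one,
      hW0iP]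
    simp
  have ht2 : (W0⁻¹ * Z).trace ≤ Z.trace := by
    have h := trace_mul_nonneg hNpsd hZpsd
    rw [Matrix.sub_mul, Matrix.one_mul, trace_sub] at h
    linarith
  have core : -Z.trace + Real.log W.det ≤ -(matPosPart A).trace + Real.log W0.det := by
    rw [htrW] at hld
    linarith
  have := mul_le_mul_of_nonneg_left core hkj.le
  linarith
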